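/- Assume X_A and X_B are conditionally independent given Y, and let PS : Σ_B × Δ_{Σ_B} → ℝ be a proper scoring rule. Define h_A*(x_A)(y) = Pr[Y=y|X_A=x_A] and v_B*(x_B)(y) = Pr[X_B=x_B|Y=y]. Then for every hypothesis pair h_A : Σ_A → Δ_Σ and v_B : Σ_B → [0,1]^Σ satisfying the normalization constraint: (i) for each x_A, the vector q_{x_A} := (Σ_y v_B(x_B)(y)·h_A(x_A)(y))_{x_B∈Σ_B} lies in Δ_{Σ_B}; (ii) the vector q*_{x_A} built from (h_A*, v_B*) satisfies q*_{x_A}(x_B) = Pr[X_B=x_B|X_A=x_A]; and (iii) the expected PS-gain satisfies Σ_{x_A,x_B} Pr[X_A=x_A, X_B=x_B]·PS(x_B, q_{x_A}) ≤ Σ_{x_A,x_B} Pr[X_A=x_A, X_B=x_B]·PS(x_B, q*_{x_A}), so (h_A*, v_B*) is a maximizer of the expected PS-gain. -/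

import Mathlib

noncomputable section

variable {SA SB S : Type*}

/-- Joint probability `Pr[X_A = a, X_B = b]` induced by the joint pmf `ν` of `(X_A, X_B, Y)`. -/
def jAB [Fintype S] (ν : SA → SB → S → ℝ) (a : SA) (b : SB) : ℝ := ∑ y, ν a b y

/-- Joint probability `Pr[X_A = a, Y = y]`. -/
def jAY [Fintype SB] (ν : SA → SB → S → ℝ) (a : SA) (y : S) : ℝ := ∑ b, ν a b y

/-- Joint probability `Pr[X_B = b, Y = y]`. -/
def jBY [Fintype SA] (ν : SA → SB → S → ℝ) (b : SB) (y : S) : ℝ := ∑ a, ν a b y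

/-- Marginal probability `Pr[X_A = a]`. -/
def prA [Fintype SB] [Fintype S] (ν : SA → SB → S → ℝ) (a : SA) : ℝ := ∑ b, ∑ y, ν a b y

/-- Marginal probability `Pr[X_B = b]`. -/
def prB [Fintype SA] [Fintype S] (ν : SA → SB → S → ℝ) (b : SB) : ℝ := ∑ a, ∑ y, ν a b y

/-- Marginal probability `Pr[Y = y]`. -/
def prY [Fintype SA] [Fintype SB] (ν : SA → SB → S → ℝ) (y : S) : ℝ := ∑ a, ∑ b, ν a b y

/-- Pointwise mutual information `K(a,b) = Pr[a,b]/(Pr[a]·Pr[b])`. -/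
def K [Fintype SA] [Fintype SB] [Fintype S] (ν : SA → SB → S → ℝ) (a : SA) (b : SB) : ℝ :=
  jAB ν a b / (prA ν a * prB ν b)

/-- Conditional probability `Pr[Y = y | X_A = a]`. -/
def condA [Fintype SB] [Fintype S] (ν : SA → SB → S → ℝ) (a : SA) (y : S) : ℝ :=
  jAY ν a y / prA ν a

/-- Conditional probability `Pr[Y = y | X_B = b]`. -/
def condB [Fintype SA] [Fintype S] (ν : SA → SB → S → ℝ) (b : SB) (y : S) : ℝ :=
  jBY ν b y / prB ν b

/-- `X_A` and `X_B` are conditionally independent given `Y`: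
`Pr[a, b | y] = Pr[a | y] · Pr[b | y]` for all `a, b, y`. -/
def CondIndep [Fintype SA] [Fintype SB] (ν : SA → SB → S → ℝ) : Prop :=
  ∀ a b y, ν a b y / prY ν y = (jAY ν a y / prY ν y) * (jBY ν b y / prY ν y)

/-- `ν` is a probability mass function. -/
def IsPMF [Fintype SA] [Fintype SB] [Fintype S] (ν : SA → SB → S → ℝ) : Prop :=
  (∀ a b y, 0 ≤ ν a b y) ∧ ∑ a, ∑ b, ∑ y, ν a b y = 1

/-- `p` is a probability vector: nonnegative entries summing to `1`. -/
def IsProbVec {T : Type*} [Fintype T] (p : T → ℝ) : Prop := (∀ t, 0 ≤ p t) ∧ ∑ t, p t = 1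

/-- The convex conjugate `f*(x) = sup_t (t·x − f(t))`, as a real-valued supremum. -/
def fconj (f : ℝ → ℝ) (x : ℝ) : ℝ := sSup (Set.range fun t => t * x - f t)

/-- `c` is a subgradient of `f` at `t`: `f(s) ≥ f(t) + c·(s − t)` for all `s`. -/
def IsSubgradientAt (f : ℝ → ℝ) (t c : ℝ) : Prop := ∀ s : ℝ, f t + c * (s - t) ≤ f s

/-- The f-mutual information `MI^f(X_A;X_B) = Σ_{a,b} Pr[a]·Pr[b]·f(K(a,b))`. -/
def MIf [Fintype SA] [Fintype SB] [Fintype S] (f : ℝ → ℝ) (ν : SA → SB → S → ℝ) : ℝ :=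
  ∑ a, ∑ b, prA ν a * prB ν b * f (K ν a b)

/-- The agreement `g(a,b) = Σ_y h_A(a)(y)·h_B(b)(y)/p(y)`. -/
def gagr [Fintype S] (hA : SA → S → ℝ) (hB : SB → S → ℝ) (p : S → ℝ) (a : SA) (b : SB) : ℝ :=
  ∑ y, hA a y * hB b y / p y

/-- Expected `f`-mutual information gain
`MIG^f(h_A,h_B,p) = Σ Pr[a,b]·f'(g(a,b)) − Σ Pr[a]·Pr[b]·f*(f'(g(a,b)))`. -/
def MIG [Fintype SA] [Fintype SB] [Fintype S] (f : ℝ → ℝ) (ν : SA → SB → S → ℝ)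
    (hA : SA → S → ℝ) (hB : SB → S → ℝ) (p : S → ℝ) : ℝ :=
  ∑ a, ∑ b, jAB ν a b * deriv f (gagr hA hB p a b)
    - ∑ a, ∑ b, prA ν a * prB ν b * fconj f (deriv f (gagr hA hB p a b))

/-- Each agent's expected payment in the multi-task common ground mechanism `MCG(f)`. -/
def Pay [Fintype SA] [Fintype SB] [Fintype S] (f : ℝ → ℝ) (ν : SA → SB → S → ℝ)
    (sA : SA → S → ℝ) (sB : SB → S → ℝ) : ℝ :=
  MIG f ν sA sB (prY ν)

/-- `({a^{x_A}}, {b^{x_B}}, r)` is a solution of the agreement system: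
probability vectors, `r` strictly positive, with
`Σ_y a^{x_A}(y)·b^{x_B}(y)/r(y) = K(x_A,x_B)` for all `x_A, x_B`. -/
def AgreementSolution [Fintype SA] [Fintype SB] [Fintype S] (ν : SA → SB → S → ℝ)
    (a : SA → S → ℝ) (b : SB → S → ℝ) (r : S → ℝ) : Prop :=
  (∀ xa, IsProbVec (a xa)) ∧ (∀ xb, IsProbVec (b xb)) ∧ IsProbVec r ∧ (∀ y, 0 < r y) ∧
    ∀ xa xb, (∑ y, a xa y * b xb y / r y) = K ν xa xb

/-- The prior is well-defined: any two solutions of the agreement system coincide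
up to a permutation of `Σ`. -/
def WellDefinedPrior [Fintype SA] [Fintype SB] [Fintype S] (ν : SA → SB → S → ℝ) : Prop :=
  ∀ (a : SA → S → ℝ) (b : SB → S → ℝ) (r : S → ℝ)
    (c : SA → S → ℝ) (d : SB → S → ℝ) (r' : S → ℝ),
    AgreementSolution ν a b r → AgreementSolution ν c d r' →
    ∃ π : Equiv.Perm S, ∀ y, r (π y) = r' y ∧ (∀ xa, a xa (π y) = c xa y)
      ∧ (∀ xb, b xb (π y) = d xb y)

/-- The prior is stable: fixing the truthful `A`-side (resp. `B`-side) of the agreement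
system, the only solution for the other side is the truthful one. -/
def StablePrior [Fintype SA] [Fintype SB] [Fintype S] (ν : SA → SB → S → ℝ) : Prop :=
  (∀ b : SB → S → ℝ, (∀ xb, IsProbVec (b xb)) →
    (∀ xa xb, (∑ y, condA ν xa y * b xb y / prY ν y) = K ν xa xb) →
    ∀ xb y, b xb y = condB ν xb y) ∧
  (∀ a : SA → S → ℝ, (∀ xa, IsProbVec (a xa)) →
    (∀ xa xb, (∑ y, a xa y * condB ν xb y / prY ν y) = K ν xa xb) →
    ∀ xa y, a xa y = condA ν xa y)

/-- PS-gain: under conditional independence, for any proper scoring rule `PS` on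
`Σ_B` and any normalized hypothesis pair `(h_A, v_B)`:
(i) each `q_{x_A} = (Σ_y v_B(x_B)(y)·h_A(x_A)(y))_{x_B}` is a probability vector on `Σ_B`;
(ii) the truthful pair yields `q*_{x_A}(x_B) = Pr[X_B=x_B|X_A=x_A]`; and
(iii) the expected PS-gain of `(h_A, v_B)` is at most that of the truthful pair. -/
theorem stmt_15 [Fintype SA] [Fintype SB] [Fintype S] [Nonempty SA] [Nonempty SB] [Nonempty S]
    (ν : SA → SB → S → ℝ) (hν : IsPMF ν)
    (hA : ∀ a, 0 < prA ν a) (hB : ∀ b, 0 < prB ν b) (hY : ∀ y, 0 < prY ν y)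
    (hci : CondIndep ν)
    (PS : SB → (SB → ℝ) → ℝ)
    (hPS : ∀ p q : SB → ℝ, IsProbVec p → IsProbVec q →
      ∑ σ, p σ * PS σ q ≤ ∑ σ, p σ * PS σ p) :
    ∀ (hA' : SA → S → ℝ) (vB : SB → S → ℝ),
      (∀ a, IsProbVec (hA' a)) →
      (∀ b y, 0 ≤ vB b y ∧ vB b y ≤ 1) →
      (∀ y, ∑ b, vB b y = 1) →
      (∀ a, IsProbVec (fun b => ∑ y, vB b y * hA' a y))
      ∧ (∀ a b, (∑ y, (jBY ν b y / prY ν y) * condA ν a y) = jAB ν a b / prA ν a)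
      ∧ (∑ a, ∑ b, jAB ν a b * PS b (fun b' => ∑ y, vB b' y * hA' a y)
          ≤ ∑ a, ∑ b, jAB ν a b * PS b (fun b' => ∑ y, (jBY ν b' y / prY ν y) * condA ν a y)) := by
  intro hA' vB hprob hvB01 hvBsum
  have hi : ∀ a, IsProbVec (fun b => ∑ y, vB b y * hA' a y) := by
    intro a
    constructor
    · intro b
      exact Finset.sum_nonneg fun y _ => mul_nonneg (hvB01 b y).1 ((hprob a).1 y)
    · rw [Finset.sum_comm]
      calc ∑ y, ∑ b, vB b y * hA' a y = ∑ y, (∑ b, vB b y) * hA' a y := by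
            simp [Finset.sum_mul]
        _ = ∑ y, hA' a y := by simp [hvBsum]
        _ = 1 := (hprob a).2
  have hii : ∀ a b, (∑ y, (jBY ν b y / prY ν y) * condA ν a y) = jAB ν a b / prA ν a := by
    intro a b
    have : ∀ y, (jBY ν b y / prY ν y) * condA ν a y = ν a b y / prA ν a := by
      intro y
      have h := hci a b y
      have hy := (hY y).ne'
      have ha := (hA a).ne'
      field_simp [condA] at h ⊢
      have h' : ν a b y * prY ν y = jAY ν a y * jBY ν b y := by
        apply mul_right_cancel₀ hy
        linear_combination (prY ν y) * h
      have hc : condA ν a y * prA ν a = jAY ν a y := by rw [condA, div_mul_cancel₀ _ ha]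
      linear_combination jBY ν b y * hc - h'
    simp only [this, jAB, ← Finset.sum_div]
  refine ⟨hi, hii, ?_⟩
  have hstar : ∀ a, IsProbVec (fun b' => ∑ y, (jBY ν b' y / prY ν y) * condA ν a y) := by
    intro a
    constructor
    · intro b
      dsimp only
      rw [hii a b]
      exact div_nonneg (Finset.sum_nonneg fun y _ => hν.1 a b y) (hA a).le
    · dsimp only
      simp only [hii]
      rw [← Finset.sum_div, div_eq_one_iff_eq (hA a).ne']
      simp [prA, jAB]
  apply Finset.sum_le_sum
  intro a _
  have key : ∀ b, jAB ν a b = prA ν a * (∑ y, (jBY ν b y / prY ν y) * condA ν a y) := by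
    intro b
    rw [hii a b, mul_comm, div_mul_cancel₀ _ (hA a).ne']
  calc ∑ b, jAB ν a b * PS b (fun b' => ∑ y, vB b' y * hA' a y)
      = prA ν a * ∑ b, (∑ y, (jBY ν b y / prY ν y) * condA ν a y)
          * PS b (fun b' => ∑ y, vB b' y * hA' a y) := by
        rw [Finset.mul_sum]
        exact Finset.sum_congr rfl fun b _ => by rw [key b]; ring
    _ ≤ prA ν a * ∑ b, (∑ y, (jBY ν b y / prY ν y) * condA ν a y)
          * PS b (fun b' => ∑ y, (jBY ν b' y / prY ν y) * condA ν a y) := by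
        apply mul_le_mul_of_nonneg_left _ (hA a).le
        exact hPS _ _ (hstar a) (hi a)
    _ = ∑ b, jAB ν a b * PS b (fun b' => ∑ y, (jBY ν b' y / prY ν y) * condA ν a y) := by
        rw [Finset.mul_sum]
        exact Finset.sum_congr rfl fun b _ => by rw [key b]; ring
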